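/- Let n≥t≥k≥0 be integers and let D_{n,t,k} be the (k+1)×(k+1) matrix with (i,j)-entry binom(n−k, t−k+i−j) for 0≤i,j≤k (with binom(a,b)=0 for b<0 or b>a). Then det(D_{n,t,k}) = Π_{i=0}^{k} binom(n, t−i) / binom(n, i). -/

import Mathlib

/-- The matrix `D_{n,t,k}` with `(i,j)`-entry `binom(n-k, t-k+i-j)`
(zero when the lower index is negative or exceeds `n-k`). -/
def Dmat (n t k : ℕ) : Matrix (Fin (k + 1)) (Fin (k + 1)) ℚ :=
  fun i j =>
    if 0 ≤ (t : ℤ) - k + i - j then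
      ((n - k).choose ((t : ℤ) - k + i - j).toNat : ℚ)
    else 0

open Matrix Equiv Finset

set_option maxHeartbeats 1600000

namespace Stmt5Aux

variable {m : ℕ}

def mid (i : Fin m) : Fin (m + 2) := i.succ.castSucc

def sel0 : (Unit ⊕ Fin m) ≃ Fin (m + 1) where
  toFun := Sum.elim (fun _ => 0) Fin.succ
  invFun := Fin.cases (Sum.inl ()) Sum.inr
  left_inv := by rintro (⟨⟩ | i) <;> simp
  right_inv := by
    intro i
    induction i using Fin.cases <;> simp

def selL : (Unit ⊕ Fin m) ≃ Fin (m + 1) where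
  toFun := Sum.elim (fun _ => Fin.last m) Fin.castSucc
  invFun := Fin.lastCases (Sum.inl ()) Sum.inr
  left_inv := by rintro (⟨⟩ | i) <;> simp
  right_inv := by
    intro i
    induction i using Fin.lastCases <;> simp

def emb : Fin 2 → (Fin (m + 1) → Fin (m + 2)) := ![Fin.castSucc, Fin.succ]

def sel : Fin 2 → ((Unit ⊕ Fin m) ≃ Fin (m + 1)) := ![sel0, selL]

def cor : Fin 2 → Fin (m + 2) := ![0, Fin.last (m + 1)]

lemma emb_sel_inl (a : Fin 2) (u : Unit) : emb a (sel a (Sum.inl u)) = cor (m := m) a := by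
  fin_cases a <;> simp [emb, sel, cor, sel0, selL, Fin.succ_last]

lemma emb_sel_inr (a : Fin 2) (i : Fin m) : emb a (sel a (Sum.inr i)) = mid i := by
  fin_cases a <;> simp [emb, sel, mid, sel0, selL]

def Ebig : (Fin 2 ⊕ Fin m) ≃ Fin (m + 2) where
  toFun := Sum.elim cor mid
  invFun := Fin.cases (Sum.inl 0) (Fin.lastCases (Sum.inl 1) Sum.inr)
  left_inv := by
    have hc1 : (cor 1 : Fin (m + 2)) = Fin.succ (Fin.last m) := by
      simp [cor, Fin.succ_last]
    have hmi : ∀ i : Fin m, mid i = Fin.succ i.castSucc := by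
      intro i; simp [mid]
    rintro (a | i)
    · fin_cases a
      · simp [cor]
      · show Fin.cases (Sum.inl 0) (Fin.lastCases (Sum.inl 1) Sum.inr)
            (Sum.elim cor mid (Sum.inl 1)) = Sum.inl 1
        rw [Sum.elim_inl, hc1, Fin.cases_succ, Fin.lastCases_last]
    · show Fin.cases (Sum.inl 0) (Fin.lastCases (Sum.inl 1) Sum.inr)
          (Sum.elim cor mid (Sum.inr i)) = Sum.inr i
      rw [Sum.elim_inr, hmi, Fin.cases_succ, Fin.lastCases_castSucc]
  right_inv := by
    have hc1 : (cor 1 : Fin (m + 2)) = Fin.succ (Fin.last m) := by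
      simp [cor, Fin.succ_last]
    have hmi : ∀ i : Fin m, mid i = Fin.succ i.castSucc := by
      intro i; simp [mid]
    intro x
    induction x using Fin.cases with
    | zero =>
      show Sum.elim cor mid (Fin.cases (Sum.inl 0) (Fin.lastCases (Sum.inl 1) Sum.inr) 0) = 0
      rw [Fin.cases_zero, Sum.elim_inl]; simp [cor]
    | succ j =>
      show Sum.elim cor mid (Fin.cases (Sum.inl 0) (Fin.lastCases (Sum.inl 1) Sum.inr) j.succ)
          = j.succ
      rw [Fin.cases_succ]
      induction j using Fin.lastCases with
      | last => rw [Fin.lastCases_last, Sum.elim_inl, hc1]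
      | cast i => rw [Fin.lastCases_castSucc, Sum.elim_inr, hmi]

variable (A : Matrix (Fin (m + 2)) (Fin (m + 2)) ℚ)

/-- The inner `m × m` block. -/
def inner : Matrix (Fin m) (Fin m) ℚ := A.submatrix mid mid

/-- Schur-complement entries. -/
noncomputable def schur (a b : Fin 2) : ℚ :=
  A (cor a) (cor b) -
    ∑ p, ∑ l, A (cor a) (mid p) * (Ring.inverse (inner A)) p l * A (mid l) (cor b)

lemma blockify (a b : Fin 2) :
    (A.submatrix (emb a) (emb b)).submatrix (sel a) (sel b) =
      Matrix.fromBlocks (Matrix.of fun _ _ => A (cor a) (cor b))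
        (Matrix.of fun _ j => A (cor a) (mid j))
        (Matrix.of fun i _ => A (mid i) (cor b)) (inner A) := by
  ext i j
  rcases i with i | i <;> rcases j with j | j <;>
    simp [Matrix.submatrix_apply, Matrix.fromBlocks, inner, emb_sel_inl, emb_sel_inr]

lemma big_blockify :
    A.submatrix (Ebig (m := m)) (Ebig (m := m)) =
      Matrix.fromBlocks (Matrix.of fun a b => A (cor a) (cor b))
        (Matrix.of fun a j => A (cor a) (mid j))
        (Matrix.of fun i b => A (mid i) (cor b)) (inner A) := by
  ext i j
  rcases i with i | i <;> rcases j with j | j <;>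
    simp [Matrix.submatrix_apply, Matrix.fromBlocks, inner, Ebig]

section WithInv

variable [Invertible (inner A)]

lemma schur_entry (a b : Fin 2) :
    (Matrix.of (fun a b => A (cor a) (cor b)) -
        (Matrix.of fun a j => A (cor a) (mid j)) * ⅟(inner A) *
          (Matrix.of fun i b => A (mid i) (cor b))) a b = schur A a b := by
  simp only [schur, Matrix.sub_apply, Matrix.of_apply, Ring.inverse_invertible,
    Matrix.mul_apply, Finset.sum_mul]
  rw [Finset.sum_comm]

lemma schur_entry' (a b : Fin 2) :
    (Matrix.of (fun _ _ : Unit => A (cor a) (cor b)) -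
        (Matrix.of fun (_ : Unit) j => A (cor a) (mid j)) * ⅟(inner A) *
          (Matrix.of fun i (_ : Unit) => A (mid i) (cor b))) () () = schur A a b := by
  simp only [schur, Matrix.sub_apply, Matrix.of_apply, Ring.inverse_invertible,
    Matrix.mul_apply, Finset.sum_mul]
  rw [Finset.sum_comm]

lemma det_corner (a b : Fin 2) :
    ((A.submatrix (emb a) (emb b)).submatrix ⇑(sel a) ⇑(sel b)).det =
      (inner A).det * schur A a b := by
  rw [blockify, Matrix.det_fromBlocks₂₂]
  congr 1
  rw [Matrix.det_unique]
  exact schur_entry' A a b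

lemma det_diag (a : Fin 2) :
    (A.submatrix (emb a) (emb a)).det = (inner A).det * schur A a a := by
  rw [← det_corner A a a, Matrix.det_submatrix_equiv_self]

lemma det_off_mul :
    (A.submatrix (emb 0) (emb 1)).det * (A.submatrix (emb 1) (emb 0)).det =
      (inner A).det ^ 2 * (schur A 0 1 * schur A 1 0) := by
  set M01 := A.submatrix (emb 0) (emb 1) with hM01
  set M10 := A.submatrix (emb 1) (emb 0) with hM10
  set σ : Equiv.Perm (Unit ⊕ Fin m) := selL.trans sel0.symm with hσ
  have e1 : M01.submatrix ⇑(sel 0) ⇑(sel 1) = (M01.submatrix ⇑sel0 ⇑sel0).submatrix id ⇑σ := by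
    ext i j
    simp [sel, Matrix.submatrix_apply, hσ]
  have e2 : M10.submatrix ⇑(sel 1) ⇑(sel 0) = (M10.submatrix ⇑selL ⇑selL).submatrix id ⇑σ.symm := by
    ext i j
    simp [sel, Matrix.submatrix_apply, hσ]
  have d1 : (inner A).det * schur A 0 1 = Equiv.Perm.sign σ * M01.det := by
    rw [← det_corner A 0 1, ← hM01, e1, Matrix.det_permute', Matrix.det_submatrix_equiv_self]
  have d2 : (inner A).det * schur A 1 0 = Equiv.Perm.sign σ.symm * M10.det := by
    rw [← det_corner A 1 0, ← hM10, e2, Matrix.det_permute', Matrix.det_submatrix_equiv_self]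
  have hsgn : ((Equiv.Perm.sign σ : ℤˣ) : ℚ) * ((Equiv.Perm.sign σ.symm : ℤˣ) : ℚ) = 1 := by
    have : σ.symm = σ⁻¹ := rfl
    rw [this, Equiv.Perm.sign_inv]
    rcases Int.units_eq_one_or (Equiv.Perm.sign σ) with h | h <;> simp [h]
  have := congrArg₂ HMul.hMul d1 d2
  calc M01.det * M10.det
      = (↑(Equiv.Perm.sign σ) * M01.det) * (↑(Equiv.Perm.sign σ.symm) * M10.det) := by
        linear_combination (-(M01.det * M10.det)) * hsgn
    _ = ((inner A).det * schur A 0 1) * ((inner A).det * schur A 1 0) := by rw [d1, d2]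
    _ = (inner A).det ^ 2 * (schur A 0 1 * schur A 1 0) := by ring

lemma det_big :
    A.det = (inner A).det * (schur A 0 0 * schur A 1 1 - schur A 0 1 * schur A 1 0) := by
  rw [← Matrix.det_submatrix_equiv_self (Ebig (m := m)) A, big_blockify,
    Matrix.det_fromBlocks₂₂, Matrix.det_fin_two]
  rw [schur_entry, schur_entry, schur_entry, schur_entry]

end WithInv

theorem dodgson (h : (A.submatrix mid mid).det ≠ 0) :
    A.det * (A.submatrix mid mid).det =
      (A.submatrix Fin.castSucc Fin.castSucc).det * (A.submatrix Fin.succ Fin.succ).det -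
        (A.submatrix Fin.succ Fin.castSucc).det * (A.submatrix Fin.castSucc Fin.succ).det := by
  letI : Invertible (inner A) :=
    (inner A).invertibleOfIsUnitDet (isUnit_iff_ne_zero.2 h)
  have h00 : A.submatrix Fin.castSucc Fin.castSucc = A.submatrix (emb 0) (emb 0) := rfl
  have h11 : A.submatrix Fin.succ Fin.succ = A.submatrix (emb 1) (emb 1) := rfl
  have h10 : A.submatrix Fin.succ Fin.castSucc = A.submatrix (emb 1) (emb 0) := rfl
  have h01 : A.submatrix Fin.castSucc Fin.succ = A.submatrix (emb 0) (emb 1) := rfl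
  rw [h00, h11, h10, h01, det_diag, det_diag, det_big A, show A.submatrix mid mid = inner A from rfl]
  rw [mul_comm ((A.submatrix (emb 1) (emb 0)).det) ((A.submatrix (emb 0) (emb 1)).det)] at *
  rw [det_off_mul]
  ring

/-! ### Arithmetic helpers -/

def zc (n : ℕ) (x : ℤ) : ℚ := if 0 ≤ x then (n.choose x.toNat : ℚ) else 0

lemma zc_ofNat (n a : ℕ) : zc n (a : ℤ) = (n.choose a : ℚ) := by
  simp [zc]

lemma zc_neg {n : ℕ} {x : ℤ} (h : x < 0) : zc n x = 0 := by
  simp [zc, not_le.2 h]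

def Pp (n t j : ℕ) : ℚ := ∏ i ∈ Finset.range j, zc n ((t : ℤ) - i) / (n.choose i : ℚ)

lemma Pp_succ (n t j : ℕ) :
    Pp n t (j + 1) = Pp n t j * (zc n ((t : ℤ) - j) / (n.choose j : ℚ)) :=
  Finset.prod_range_succ _ _

lemma Pp_zero (n t : ℕ) : Pp n t 0 = 1 := rfl

lemma Pp_pos {n t j : ℕ} (hj : j ≤ t + 1) (htn : t ≤ n) : 0 < Pp n t j := by
  apply Finset.prod_pos
  intro i hi
  rw [Finset.mem_range] at hi
  have h1 : (0 : ℤ) ≤ (t : ℤ) - i := by omega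
  rw [zc, if_pos h1]
  apply div_pos
  · have h2 : ((t : ℤ) - i).toNat ≤ n := by omega
    exact_mod_cast Nat.choose_pos h2
  · exact_mod_cast Nat.choose_pos (by omega : i ≤ n)

lemma ch_succ (n a : ℕ) (h : a ≤ n) :
    (n.choose (a + 1) : ℚ) * ((a : ℚ) + 1) = (n.choose a : ℚ) * ((n : ℚ) - a) := by
  have h1 := congrArg (fun x : ℕ => (x : ℚ)) (Nat.choose_succ_right_eq n a)
  push_cast [Nat.cast_sub h] at h1
  linarith [h1]

lemma ch_compl (n a : ℕ) (h : a ≤ n) :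
    ((n : ℚ) - a) * (n.choose a : ℚ) = (n : ℚ) * ((n - 1).choose a : ℚ) := by
  rcases Nat.eq_zero_or_pos n with rfl | hn
  · interval_cases a
    simp
  · have h1 := congrArg (fun x : ℕ => (x : ℚ)) (Nat.choose_mul_succ_eq (n - 1) a)
    have hn1 : n - 1 + 1 = n := by omega
    rw [hn1] at h1
    push_cast [Nat.cast_sub h] at h1
    linarith [h1]

lemma ch_top (n a : ℕ) (h : 1 ≤ n) :
    ((a : ℚ) + 1) * (n.choose (a + 1) : ℚ) = (n : ℚ) * ((n - 1).choose a : ℚ) := by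
  have h1 := congrArg (fun x : ℕ => (x : ℚ)) (Nat.add_one_mul_choose_eq (n - 1) a)
  have hn1 : n - 1 + 1 = n := by omega
  rw [hn1] at h1
  push_cast at h1
  linarith [h1]

lemma Pp_one (n t : ℕ) : Pp n t 1 = (n.choose t : ℚ) := by
  simp [Pp, Finset.prod_range_one, zc_ofNat]

lemma key3 (p s : ℕ) (h : s + 1 ≤ p) :
    ((s : ℚ) + 2) * ((p : ℚ) - s) * (p.choose (s + 2) : ℚ) * (p.choose s : ℚ) =
      ((p : ℚ) - s - 1) * ((s : ℚ) + 1) * (p.choose (s + 1) : ℚ) ^ 2 := by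
  have h1 := ch_succ p (s + 1) (by omega)
  have h2 := ch_succ p s (by omega)
  push_cast at h1 h2
  linear_combination ((p : ℚ) - s) * (p.choose s : ℚ) * h1 -
    ((p : ℚ) - s - 1) * (p.choose (s + 1) : ℚ) * h2

lemma lemB (j n t : ℕ) (h1 : j + 1 ≤ t) (h2 : 2 ≤ t) (h3 : t ≤ n) :
    (t : ℚ) * ((n : ℚ) - t + j + 1) * (Pp (n - 1) t (j + 1) * Pp (n - 1) (t - 2) (j + 1)) =
      ((n : ℚ) - t) * ((t : ℚ) - j - 1) * Pp (n - 1) (t - 1) (j + 1) ^ 2 := by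
  induction j with
  | zero =>
    obtain ⟨s, rfl⟩ : ∃ s, t = s + 2 := ⟨t - 2, by omega⟩
    obtain ⟨p, rfl⟩ : ∃ p, n = p + 1 := ⟨n - 1, by omega⟩
    have e1 : p + 1 - 1 = p := by omega
    have e2 : s + 2 - 2 = s := by omega
    have e3 : s + 2 - 1 = s + 1 := by omega
    rw [e1, e2, e3, Pp_one, Pp_one, Pp_one]
    have key := key3 p s (by omega)
    push_cast
    linear_combination key
  | succ j ih =>
    have hIH := ih (by omega)
    obtain ⟨a, rfl⟩ : ∃ a, t = a + (j + 2) := ⟨t - (j + 2), by omega⟩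
    obtain ⟨p, rfl⟩ : ∃ p, n = p + 1 := ⟨n - 1, by omega⟩
    have e1 : p + 1 - 1 = p := by omega
    have e2 : a + (j + 2) - 2 = a + j := by omega
    have e3 : a + (j + 2) - 1 = a + j + 1 := by omega
    rw [e1, e2, e3] at hIH ⊢
    rw [Pp_succ p (a + (j + 2)) (j + 1), Pp_succ p (a + j) (j + 1),
      Pp_succ p (a + j + 1) (j + 1)]
    rcases Nat.eq_zero_or_pos a with rfl | ha
    · have hz : zc p (((0 + j : ℕ) : ℤ) - ((j + 1 : ℕ) : ℤ)) = 0 := zc_neg (by omega)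
      rw [hz]
      push_cast
      ring
    · obtain ⟨b, rfl⟩ : ∃ b, a = b + 1 := ⟨a - 1, by omega⟩
      have hz1 : zc p (((b + 1 + (j + 2) : ℕ) : ℤ) - ((j + 1 : ℕ) : ℤ))
          = (p.choose (b + 2) : ℚ) := by
        rw [show ((b + 1 + (j + 2) : ℕ) : ℤ) - ((j + 1 : ℕ) : ℤ) = ((b + 2 : ℕ) : ℤ) by
          push_cast; ring, zc_ofNat]
      have hz2 : zc p (((b + 1 + j : ℕ) : ℤ) - ((j + 1 : ℕ) : ℤ)) = (p.choose b : ℚ) := by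
        rw [show ((b + 1 + j : ℕ) : ℤ) - ((j + 1 : ℕ) : ℤ) = ((b : ℕ) : ℤ) by
          push_cast; ring, zc_ofNat]
      have hz3 : zc p (((b + 1 + j + 1 : ℕ) : ℤ) - ((j + 1 : ℕ) : ℤ))
          = (p.choose (b + 1) : ℚ) := by
        rw [show ((b + 1 + j + 1 : ℕ) : ℤ) - ((j + 1 : ℕ) : ℤ) = ((b + 1 : ℕ) : ℤ) by
          push_cast; ring, zc_ofNat]
      rw [hz1, hz2, hz3]
      have hkey := key3 p b (by omega)
      have hprod := congrArg₂ HMul.hMul hIH hkey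
      have key : ((b : ℚ) + j + 3) * ((p : ℚ) - b) *
            (Pp p (b + 1 + (j + 2)) (j + 1) * (p.choose (b + 2) : ℚ) *
              (Pp p (b + 1 + j) (j + 1) * (p.choose b : ℚ))) =
          ((p : ℚ) - b - j - 2) * ((b : ℚ) + 1) *
            (Pp p (b + 1 + j + 1) (j + 1) * (p.choose (b + 1) : ℚ)) ^ 2 := by
        have hne : ((p : ℚ) - b - 1) * ((b : ℚ) + 2) ≠ 0 := by
          have hpb : b + j + 3 ≤ p + 1 := by omega
          have : (b : ℚ) + j + 3 ≤ (p : ℚ) + 1 := by exact_mod_cast hpb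
          intro hx
          rcases mul_eq_zero.1 hx with hx | hx <;> nlinarith
        apply mul_left_cancel₀ hne
        push_cast at hprod
        linear_combination hprod
      push_cast
      linear_combination (((p.choose (j + 1) : ℚ)) ^ 2)⁻¹ * key
lemma lemA (j n t : ℕ) (h1 : j + 1 ≤ t) (h2 : 2 ≤ t) (h3 : t ≤ n) :
    (t : ℚ) * ((n : ℚ) - t + j + 1) * (Pp n t (j + 2) * Pp (n - 2) (t - 2) j) =
      (n : ℚ) * ((j : ℚ) + 1) * Pp (n - 1) (t - 1) (j + 1) ^ 2 := by
  induction j with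
  | zero =>
    obtain ⟨s, rfl⟩ : ∃ s, t = s + 2 := ⟨t - 2, by omega⟩
    obtain ⟨q, rfl⟩ : ∃ q, n = q + 2 := ⟨n - 2, by omega⟩
    have e1 : q + 2 - 1 = q + 1 := by omega
    have e2 : q + 2 - 2 = q := by omega
    have e3 : s + 2 - 2 = s := by omega
    have e4 : s + 2 - 1 = s + 1 := by omega
    rw [e1, e2, e3, e4, Pp_zero, Pp_one]
    rw [Pp_succ (q + 2) (s + 2) 1, Pp_one]
    have hz : zc (q + 2) (((s + 2 : ℕ) : ℤ) - ((1 : ℕ) : ℤ)) = ((q + 2).choose (s + 1) : ℚ) := by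
      rw [show ((s + 2 : ℕ) : ℤ) - ((1 : ℕ) : ℤ) = ((s + 1 : ℕ) : ℤ) by push_cast; ring, zc_ofNat]
    rw [hz, Nat.choose_one_right]
    have h1' := ch_top (q + 2) (s + 1) (by omega)
    have h2' := ch_compl (q + 2) (s + 1) (by omega)
    rw [e1] at h1' h2'
    have key : ((s : ℚ) + 2) * ((q : ℚ) - s + 1) *
          ((q + 2).choose (s + 2) : ℚ) * ((q + 2).choose (s + 1) : ℚ) =
        ((q : ℚ) + 2) ^ 2 * ((q + 1).choose (s + 1) : ℚ) ^ 2 := by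
      push_cast at h1' h2'
      linear_combination ((q : ℚ) - s + 1) * ((q + 2).choose (s + 1) : ℚ) * h1' +
        ((q : ℚ) + 2) * ((q + 1).choose (s + 1) : ℚ) * h2'
    have hq2 : ((q : ℚ) + 2) ≠ 0 := by positivity
    push_cast
    field_simp
    linear_combination key
  | succ j ih =>
    have hIH := ih (by omega)
    obtain ⟨a, rfl⟩ : ∃ a, t = a + (j + 2) := ⟨t - (j + 2), by omega⟩
    obtain ⟨q, rfl⟩ : ∃ q, n = q + 2 := ⟨n - 2, by omega⟩
    have e1 : q + 2 - 1 = q + 1 := by omega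
    have e2 : q + 2 - 2 = q := by omega
    have e3 : a + (j + 2) - 2 = a + j := by omega
    have e4 : a + (j + 2) - 1 = a + j + 1 := by omega
    rw [e1, e2, e3, e4] at hIH ⊢
    rw [Pp_succ (q + 2) (a + (j + 2)) (j + 2), Pp_succ q (a + j) j,
      Pp_succ (q + 1) (a + j + 1) (j + 1)]
    have hz1 : zc (q + 2) (((a + (j + 2) : ℕ) : ℤ) - ((j + 2 : ℕ) : ℤ))
        = ((q + 2).choose a : ℚ) := by
      rw [show ((a + (j + 2) : ℕ) : ℤ) - ((j + 2 : ℕ) : ℤ) = ((a : ℕ) : ℤ) by push_cast; ring,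
        zc_ofNat]
    have hz2 : zc q (((a + j : ℕ) : ℤ) - ((j : ℕ) : ℤ)) = (q.choose a : ℚ) := by
      rw [show ((a + j : ℕ) : ℤ) - ((j : ℕ) : ℤ) = ((a : ℕ) : ℤ) by push_cast; ring, zc_ofNat]
    have hz3 : zc (q + 1) (((a + j + 1 : ℕ) : ℤ) - ((j + 1 : ℕ) : ℤ))
        = ((q + 1).choose a : ℚ) := by
      rw [show ((a + j + 1 : ℕ) : ℤ) - ((j + 1 : ℕ) : ℤ) = ((a : ℕ) : ℤ) by push_cast; ring,
        zc_ofNat]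
    rw [hz1, hz2, hz3]
    have ea1 := ch_compl (q + 2) a (by omega)
    have ea2 := ch_compl (q + 1) a (by omega)
    have ea3 := ch_top (q + 2) (j + 1) (by omega)
    have ea4 := ch_top (q + 1) j (by omega)
    rw [e1] at ea1 ea3
    rw [show q + 1 - 1 = q by omega] at ea2 ea4
    have hKA : ((q : ℚ) - a + 2) * ((j : ℚ) + 1) *
          (((q + 2).choose a : ℚ) * (q.choose a : ℚ) * ((q + 1).choose (j + 1) : ℚ) ^ 2) =
        ((q : ℚ) - a + 1) * ((j : ℚ) + 2) *
          (((q + 1).choose a : ℚ) ^ 2 * ((q + 2).choose (j + 2) : ℚ) * (q.choose j : ℚ)) := by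
      push_cast at ea1 ea2 ea3 ea4
      linear_combination
        ((j : ℚ) + 1) * (q.choose a : ℚ) * ((q + 1).choose (j + 1) : ℚ) ^ 2 * ea1 +
        ((q : ℚ) + 2) * ((q + 1).choose a : ℚ) * (q.choose a : ℚ) *
          ((q + 1).choose (j + 1) : ℚ) * ea4 -
        ((q : ℚ) + 2) * ((q + 1).choose a : ℚ) * (q.choose j : ℚ) *
          ((q + 1).choose (j + 1) : ℚ) * ea2 -
        ((q : ℚ) - a + 1) * ((q + 1).choose a : ℚ) ^ 2 * (q.choose j : ℚ) * ea3
    have hprod := congrArg₂ HMul.hMul hIH hKA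
    have key : ((a : ℚ) + j + 2) * ((q : ℚ) - a + 2) *
          (Pp (q + 2) (a + (j + 2)) (j + 2) * ((q + 2).choose a : ℚ) *
            (Pp q (a + j) j * (q.choose a : ℚ)) * ((q + 1).choose (j + 1) : ℚ) ^ 2) =
        ((q : ℚ) + 2) * ((j : ℚ) + 2) *
          (Pp (q + 1) (a + j + 1) (j + 1) ^ 2 * ((q + 1).choose a : ℚ) ^ 2 *
            ((q + 2).choose (j + 2) : ℚ) * (q.choose j : ℚ)) := by
      have hne : ((q : ℚ) - a + 1) * ((j : ℚ) + 1) ≠ 0 := by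
        have hq : a ≤ q := by omega
        have : (a : ℚ) ≤ (q : ℚ) := by exact_mod_cast hq
        intro hx
        rcases mul_eq_zero.1 hx with hx | hx
        · nlinarith
        · have : (0 : ℚ) ≤ (j : ℚ) := by positivity
          nlinarith
      apply mul_left_cancel₀ hne
      push_cast at hprod
      linear_combination hprod
    have hU : ((q + 2).choose (j + 2) : ℚ) ≠ 0 := by
      exact_mod_cast (Nat.choose_pos (by omega : j + 2 ≤ q + 2)).ne'
    have hV : (q.choose j : ℚ) ≠ 0 := by
      exact_mod_cast (Nat.choose_pos (by omega : j ≤ q)).ne'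
    have hW : ((q + 1).choose (j + 1) : ℚ) ≠ 0 := by
      exact_mod_cast (Nat.choose_pos (by omega : j + 1 ≤ q + 1)).ne'
    push_cast
    field_simp
    linear_combination key

lemma Dmat_apply (n t k : ℕ) (i j : Fin (k + 1)) :
    Dmat n t k i j = zc (n - k) ((t : ℤ) - k + i - j) := rfl

lemma subCC (n t k : ℕ) (ht : 1 ≤ t) :
    (Dmat n t (k + 1)).submatrix Fin.castSucc Fin.castSucc = Dmat (n - 1) (t - 1) k := by
  ext i j
  rw [Matrix.submatrix_apply, Dmat_apply, Dmat_apply]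
  congr 1
  · omega
  · simp only [Fin.coe_castSucc]
    omega

lemma subSS (n t k : ℕ) (ht : 1 ≤ t) :
    (Dmat n t (k + 1)).submatrix Fin.succ Fin.succ = Dmat (n - 1) (t - 1) k := by
  ext i j
  rw [Matrix.submatrix_apply, Dmat_apply, Dmat_apply]
  congr 1
  · omega
  · simp only [Fin.val_succ]
    omega

lemma subSC (n t k : ℕ) :
    (Dmat n t (k + 1)).submatrix Fin.succ Fin.castSucc = Dmat (n - 1) t k := by
  ext i j
  rw [Matrix.submatrix_apply, Dmat_apply, Dmat_apply]
  congr 1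
  · omega
  · simp only [Fin.val_succ, Fin.coe_castSucc]
    omega

lemma subCS (n t k : ℕ) (ht : 2 ≤ t) :
    (Dmat n t (k + 1)).submatrix Fin.castSucc Fin.succ = Dmat (n - 1) (t - 2) k := by
  ext i j
  rw [Matrix.submatrix_apply, Dmat_apply, Dmat_apply]
  congr 1
  · omega
  · simp only [Fin.val_succ, Fin.coe_castSucc]
    omega

lemma subMM (n t k : ℕ) (ht : 2 ≤ t) :
    (Dmat n t (k + 2)).submatrix (mid (m := k + 1)) (mid (m := k + 1)) =
      Dmat (n - 2) (t - 2) k := by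
  ext i j
  rw [Matrix.submatrix_apply, Dmat_apply, Dmat_apply]
  congr 1
  · omega
  · simp only [mid, Fin.coe_castSucc, Fin.val_succ]
    omega

theorem gen (k : ℕ) : ∀ n t : ℕ, k ≤ n → (Dmat n t k).det = Pp n t (k + 1) := by
  induction k using Nat.strong_induction_on with
  | _ k ih =>
    cases k with
    | zero =>
      intro n t _
      rw [Matrix.det_fin_one, Dmat_apply, Pp_one]
      rw [show (t : ℤ) - (0 : ℕ) + ((0 : Fin 1) : ℤ) - ((0 : Fin 1) : ℤ) = ((t : ℕ) : ℤ) by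
        simp]
      rw [Nat.sub_zero, zc_ofNat]
    | succ k =>
      intro n t hkn
      rcases Nat.lt_or_ge t (k + 1) with hcase | hge
      · -- t < k + 1 : row 0 is zero, and the product has a zero factor
        have hdet : (Dmat n t (k + 1)).det = 0 := by
          apply Matrix.det_eq_zero_of_row_eq_zero 0
          intro j
          rw [Dmat_apply]
          apply zc_neg
          have hj : (0 : ℤ) ≤ (j : ℤ) := by positivity
          have h0 : ((0 : Fin (k + 2)) : ℤ) = 0 := by simp
          rw [h0]
          omega
        rw [hdet]
        symm
        apply Finset.prod_eq_zero (Finset.mem_range.2 (show t + 1 < k + 2 by omega))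
        rw [show (t : ℤ) - ((t + 1 : ℕ) : ℤ) = -1 by push_cast; ring]
        rw [zc_neg (by norm_num), zero_div]
      · rcases Nat.eq_or_lt_of_le hge with hteq | hgt
        · -- t = k + 1 : lower triangular with unit diagonal
          have hdet : (Dmat n t (k + 1)).det = 1 := by
            rw [Matrix.det_of_lowerTriangular _ ?_]
            · apply Finset.prod_eq_one
              intro i _
              rw [Dmat_apply, show (t : ℤ) - ((k + 1 : ℕ) : ℤ) + (i : ℤ) - (i : ℤ) = 0 by omega]
              simp [zc]
            · intro i j hij
              have hij' : (i : ℕ) < (j : ℕ) := hij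
              rw [Dmat_apply]
              apply zc_neg
              omega
          rw [hdet]
          symm
          have hPp : Pp n t (k + 2) =
              (∏ i ∈ Finset.range (k + 2), ((n.choose (k + 1 - i)) : ℚ)) /
                (∏ i ∈ Finset.range (k + 2), ((n.choose i) : ℚ)) := by
            rw [Pp, ← Finset.prod_div_distrib]
            apply Finset.prod_congr rfl
            intro i hi
            rw [Finset.mem_range] at hi
            rw [show (t : ℤ) - (i : ℕ) = ((k + 1 - i : ℕ) : ℤ) by omega, zc_ofNat]
          rw [hPp]
          have hrefl : (∏ i ∈ Finset.range (k + 2), ((n.choose (k + 1 - i)) : ℚ)) =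
              ∏ i ∈ Finset.range (k + 2), ((n.choose i) : ℚ) := by
            have := Finset.prod_range_reflect (fun i => (n.choose i : ℚ)) (k + 2)
            rw [← this]
            apply Finset.prod_congr rfl
            intro i _
            rfl
          rw [hrefl, div_self]
          apply ne_of_gt
          apply Finset.prod_pos
          intro i hi
          rw [Finset.mem_range] at hi
          exact_mod_cast Nat.choose_pos (by omega : i ≤ n)
        · rcases Nat.lt_or_ge n t with hcase3 | htn
          · -- n < t : last row is zero
            have hdet : (Dmat n t (k + 1)).det = 0 := by
              apply Matrix.det_eq_zero_of_row_eq_zero (Fin.last (k + 1))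
              intro j
              rw [Dmat_apply]
              have hlast : ((Fin.last (k + 1) : Fin (k + 2)) : ℤ) = (k + 1 : ℕ) := by
                simp
              rw [hlast, zc]
              rw [if_pos (by omega)]
              have : (n - (k + 1)).choose
                  (((t : ℤ) - ((k + 1 : ℕ) : ℤ) + ((k + 1 : ℕ) : ℤ) - (j : ℤ)).toNat) = 0 := by
                apply Nat.choose_eq_zero_of_lt
                have hj : (j : ℕ) < k + 2 := j.isLt
                omega
              rw [this, Nat.cast_zero]
            rw [hdet]
            symm
            apply Finset.prod_eq_zero (Finset.mem_range.2 (show 0 < k + 2 by omega))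
            rw [show (t : ℤ) - ((0 : ℕ) : ℤ) = ((t : ℕ) : ℤ) by push_cast; ring, zc_ofNat]
            rw [Nat.choose_eq_zero_of_lt (by omega), Nat.cast_zero, zero_div]
          · -- k + 2 ≤ t ≤ n : Dodgson condensation
            have ht2 : 2 ≤ t := by omega
            have ht1 : 1 ≤ t := by omega
            -- determinant of the interior
            have hinner : ((Dmat n t (k + 1)).submatrix (mid (m := k)) (mid (m := k))).det =
                Pp (n - 2) (t - 2) k := by
              cases k with
              | zero => simp [Matrix.det_fin_zero, Pp_zero]
              | succ k' =>
                rw [subMM n t k' ht2]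
                exact ih k' (by omega) (n - 2) (t - 2) (by omega)
            have hpos : 0 < Pp (n - 2) (t - 2) k := Pp_pos (by omega) (by omega)
            have hdod := dodgson (Dmat n t (k + 1)) (by rw [hinner]; exact hpos.ne')
            rw [hinner, subCC n t k ht1, subSS n t k ht1, subSC n t k, subCS n t k ht2] at hdod
            rw [ih k (by omega) (n - 1) (t - 1) (by omega), ih k (by omega) (n - 1) t (by omega),
              ih k (by omega) (n - 1) (t - 2) (by omega)] at hdod
            have hA := lemA k n t (by omega) ht2 htn
            have hB := lemB k n t (by omega) ht2 htn
            have hc : (t : ℚ) * ((n : ℚ) - t + k + 1) ≠ 0 := by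
              have h1 : (1 : ℚ) ≤ (t : ℚ) := by exact_mod_cast ht1
              have h2 : (t : ℚ) ≤ (n : ℚ) := by exact_mod_cast htn
              intro hx
              rcases mul_eq_zero.1 hx with hx | hx <;> nlinarith [Nat.cast_nonneg (α := ℚ) k]
            have h1 : (t : ℚ) * ((n : ℚ) - t + k + 1) *
                  ((Dmat n t (k + 1)).det * Pp (n - 2) (t - 2) k) =
                (t : ℚ) * ((n : ℚ) - t + k + 1) *
                  (Pp n t (k + 2) * Pp (n - 2) (t - 2) k) := by
              linear_combination ((t : ℚ) * ((n : ℚ) - t + k + 1)) * hdod - hA - hB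
            have h2 := mul_left_cancel₀ hc h1
            exact mul_right_cancel₀ hpos.ne' h2
end Stmt5Aux

/-- `det D_{n,t,k} = Π_{i=0}^k binom(n,t-i)/binom(n,i)`. -/
theorem stmt5 (n t k : ℕ) (htk : k ≤ t) (hnt : t ≤ n) :
    (Dmat n t k).det =
      ∏ i ∈ Finset.range (k + 1), (n.choose (t - i) : ℚ) / (n.choose i : ℚ) := by
  rw [Stmt5Aux.gen k n t (le_trans htk hnt)]
  unfold Stmt5Aux.Pp
  apply Finset.prod_congr rfl
  intro i hi
  rw [Finset.mem_range] at hi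
  rw [show (t : ℤ) - (i : ℕ) = ((t - i : ℕ) : ℤ) by omega, Stmt5Aux.zc_ofNat]
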